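/- arXiv:2203.12959 — 4 statements merged into one kernel-verified Lean document; each statement's English description precedes it below -/
import Mathlib

section
/- Let Π ∈ Π_{q,r}. Then the set Z_r(Π) is nonempty and convex. (In fact, −Π₂₂^†Π₂₁ ∈ Z_r(Π).) -/
open Matrix
open scoped Classical

/-- The Moore–Penrose pseudoinverse of a real matrix, defined via its four
characterizing Penrose conditions (which determine it uniquely). -/
noncomputable def pinv {m n : ℕ} (A : Matrix (Fin m) (Fin n) ℝ) : Matrix (Fin n) (Fin m) ℝ :=
  if h : ∃ B : Matrix (Fin n) (Fin m) ℝ,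
      A * B * A = A ∧ B * A * B = B ∧ (A * B)ᵀ = A * B ∧ (B * A)ᵀ = B * A
  then h.choose else 0

/-- The unique positive semidefinite square root of a positive semidefinite matrix
(defined by its characterizing property, which determines it uniquely). -/
noncomputable def msqrt {n : ℕ} (A : Matrix (Fin n) (Fin n) ℝ) : Matrix (Fin n) (Fin n) ℝ :=
  if h : ∃ B : Matrix (Fin n) (Fin n) ℝ, B.PosSemidef ∧ B * B = A then h.choose else 0

/-- The quadratic matrix expression `[I; Z]ᵀ Π [I; Z]`. -/
noncomputable def qmi {q r : ℕ} (P : Matrix (Fin q ⊕ Fin r) (Fin q ⊕ Fin r) ℝ)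
    (Z : Matrix (Fin r) (Fin q) ℝ) : Matrix (Fin q) (Fin q) ℝ :=
  (fromRows (1 : Matrix (Fin q) (Fin q) ℝ) Z)ᵀ * P * fromRows 1 Z

/-- The solution set `Z_r(Π)` of the nonstrict QMI. -/
def ZrSet {q r : ℕ} (P : Matrix (Fin q ⊕ Fin r) (Fin q ⊕ Fin r) ℝ) :
    Set (Matrix (Fin r) (Fin q) ℝ) := {Z | (qmi P Z).PosSemidef}

/-- The solution set `Z_r⁺(Π)` of the strict QMI. -/
def ZrPlusSet {q r : ℕ} (P : Matrix (Fin q ⊕ Fin r) (Fin q ⊕ Fin r) ℝ) :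
    Set (Matrix (Fin r) (Fin q) ℝ) := {Z | (qmi P Z).PosDef}

/-- The solution set `Z_r⁰(Π)` of the quadratic matrix equality. -/
def ZrZeroSet {q r : ℕ} (P : Matrix (Fin q ⊕ Fin r) (Fin q ⊕ Fin r) ℝ) :
    Set (Matrix (Fin r) (Fin q) ℝ) := {Z | qmi P Z = 0}

/-- Generalized Schur complement `Π|Π₂₂ = Π₁₁ − Π₁₂ Π₂₂^† Π₂₁`. -/
noncomputable def schurC {q r : ℕ} (P : Matrix (Fin q ⊕ Fin r) (Fin q ⊕ Fin r) ℝ) :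
    Matrix (Fin q) (Fin q) ℝ :=
  P.toBlocks₁₁ - P.toBlocks₁₂ * pinv P.toBlocks₂₂ * P.toBlocks₂₁

/-- Membership in the class `Π_{q,r}`: symmetric, `Π₂₂ ⪯ 0`, `Π|Π₂₂ ⪰ 0`,
and `ker Π₂₂ ⊆ ker Π₁₂`. -/
def memPi {q r : ℕ} (P : Matrix (Fin q ⊕ Fin r) (Fin q ⊕ Fin r) ℝ) : Prop :=
  P.IsSymm ∧ (-P.toBlocks₂₂).PosSemidef ∧ (schurC P).PosSemidef ∧
    ∀ x : Fin r → ℝ, P.toBlocks₂₂ *ᵥ x = 0 → P.toBlocks₁₂ *ᵥ x = 0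


lemma conj_mul_conj {N : ℕ} (U : Matrix (Fin N) (Fin N) ℝ) (hU : star U * U = 1)
    (f g : Fin N → ℝ) :
    (U * diagonal f * star U) * (U * diagonal g * star U)
      = U * diagonal (f * g) * star U := by
  have h1 : star U * (U * diagonal g * star U) = diagonal g * star U := by
    rw [Matrix.mul_assoc, ← Matrix.mul_assoc (star U), hU, Matrix.one_mul]
  rw [Matrix.mul_assoc (U * diagonal f), h1, ← Matrix.mul_assoc,
    Matrix.mul_assoc U, diagonal_mul_diagonal]
  rfl

lemma conj_transpose_eq {N : ℕ} (U : Matrix (Fin N) (Fin N) ℝ) (f : Fin N → ℝ) :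
    (U * diagonal f * star U)ᵀ = U * diagonal f * star U := by
  rw [star_eq_conjTranspose, conjTranspose_eq_transpose_of_trivial]
  simp [transpose_mul, diagonal_transpose, Matrix.mul_assoc]

lemma exists_penrose {N : ℕ} {A : Matrix (Fin N) (Fin N) ℝ} (hA : A.IsHermitian) :
    ∃ B : Matrix (Fin N) (Fin N) ℝ,
      A * B * A = A ∧ B * A * B = B ∧ (A * B)ᵀ = A * B ∧ (B * A)ᵀ = B * A := by
  set U : Matrix (Fin N) (Fin N) ℝ := (hA.eigenvectorUnitary : Matrix (Fin N) (Fin N) ℝ) with hUdef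
  have hU : star U * U = 1 := Matrix.mem_unitaryGroup_iff'.mp (hA.eigenvectorUnitary).2
  set d : Fin N → ℝ := hA.eigenvalues with hddef
  have hspec : A = U * diagonal d * star U := by
    have := hA.spectral_theorem
    rwa [RCLike.ofReal_real_eq_id, Function.id_comp] at this
  set e : Fin N → ℝ := fun i => if d i = 0 then 0 else (d i)⁻¹ with hedef
  refine ⟨U * diagonal e * star U, ?_, ?_, ?_, ?_⟩
  · rw [hspec, conj_mul_conj U hU, conj_mul_conj U hU]
    have hde : (d * e) * d = d := by
      funext i
      by_cases h : d i = 0 <;> simp [hedef, Pi.mul_apply, h] <;> field_simp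
    rw [hde]
  · rw [hspec, conj_mul_conj U hU, conj_mul_conj U hU]
    have hed : (e * d) * e = e := by
      funext i
      by_cases h : d i = 0 <;> simp [hedef, Pi.mul_apply, h] <;> field_simp
    rw [hed]
  · rw [hspec, conj_mul_conj U hU, conj_transpose_eq]
  · rw [hspec, conj_mul_conj U hU, conj_transpose_eq]

lemma penrose_unique {N : ℕ} {A X Y : Matrix (Fin N) (Fin N) ℝ}
    (hX1 : A * X * A = A) (hX2 : X * A * X = X) (hX3 : (A * X)ᵀ = A * X) (hX4 : (X * A)ᵀ = X * A)
    (hY1 : A * Y * A = A) (hY2 : Y * A * Y = Y) (hY3 : (A * Y)ᵀ = A * Y) (hY4 : (Y * A)ᵀ = Y * A) :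
    X = Y := by
  have hAX : A * X = A * Y := by
    calc A * X = (A * X)ᵀ := hX3.symm
    _ = Xᵀ * Aᵀ := by rw [transpose_mul]
    _ = Xᵀ * (A * Y * A)ᵀ := by rw [hY1]
    _ = Xᵀ * (Aᵀ * (A * Y)ᵀ) := by rw [transpose_mul]
    _ = Xᵀ * Aᵀ * (A * Y) := by rw [hY3, Matrix.mul_assoc]
    _ = (A * X)ᵀ * (A * Y) := by rw [transpose_mul]
    _ = A * X * (A * Y) := by rw [hX3]
    _ = A * X * A * Y := by simp only [Matrix.mul_assoc]
    _ = A * Y := by rw [hX1]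
  have hXA : X * A = Y * A := by
    calc X * A = (X * A)ᵀ := hX4.symm
    _ = Aᵀ * Xᵀ := by rw [transpose_mul]
    _ = (A * (Y * A))ᵀ * Xᵀ := by rw [← Matrix.mul_assoc, hY1]
    _ = (Y * A)ᵀ * Aᵀ * Xᵀ := by rw [transpose_mul]
    _ = Y * A * (Aᵀ * Xᵀ) := by rw [hY4, Matrix.mul_assoc]
    _ = Y * A * (X * A)ᵀ := by rw [transpose_mul]
    _ = Y * A * (X * A) := by rw [hX4]
    _ = Y * (A * X * A) := by simp only [Matrix.mul_assoc]
    _ = Y * A := by rw [hX1]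
  calc X = X * A * X := hX2.symm
  _ = X * (A * Y) := by rw [Matrix.mul_assoc, hAX]
  _ = Y * A * Y := by rw [← Matrix.mul_assoc, hXA]
  _ = Y := hY2

lemma pinv_spec {N : ℕ} {A : Matrix (Fin N) (Fin N) ℝ} (hA : A.IsHermitian) :
    A * pinv A * A = A ∧ pinv A * A * pinv A = pinv A ∧
      (A * pinv A)ᵀ = A * pinv A ∧ (pinv A * A)ᵀ = pinv A * A := by
  rw [pinv, dif_pos (exists_penrose hA)]
  exact (exists_penrose hA).choose_spec

lemma pinv_transpose_eq {N : ℕ} {A : Matrix (Fin N) (Fin N) ℝ} (hA : A.IsHermitian) :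
    (pinv A)ᵀ = pinv A := by
  obtain ⟨h1, h2, h3, h4⟩ := pinv_spec hA
  have hAt : Aᵀ = A := by
    rw [← conjTranspose_eq_transpose_of_trivial]; exact hA
  set B := pinv A
  -- Bᵀ satisfies the Penrose conditions
  have e1 : A * Bᵀ * A = A := by
    calc A * Bᵀ * A = Aᵀ * Bᵀ * Aᵀ := by rw [hAt]
    _ = (A * (B * A))ᵀ := by simp only [transpose_mul, Matrix.mul_assoc]
    _ = Aᵀ := by rw [← Matrix.mul_assoc, h1]
    _ = A := hAt
  have e2 : Bᵀ * A * Bᵀ = Bᵀ := by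
    calc Bᵀ * A * Bᵀ = Bᵀ * Aᵀ * Bᵀ := by rw [hAt]
    _ = (B * (A * B))ᵀ := by simp only [transpose_mul, Matrix.mul_assoc]
    _ = Bᵀ := by rw [← Matrix.mul_assoc, h2]
  have e3 : (A * Bᵀ)ᵀ = A * Bᵀ := by
    calc (A * Bᵀ)ᵀ = B * Aᵀ := by rw [transpose_mul, transpose_transpose]
    _ = B * A := by rw [hAt]
    _ = (B * A)ᵀ := h4.symm
    _ = Aᵀ * Bᵀ := by rw [transpose_mul]
    _ = A * Bᵀ := by rw [hAt]
  have e4 : (Bᵀ * A)ᵀ = Bᵀ * A := by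
    calc (Bᵀ * A)ᵀ = Aᵀ * B := by rw [transpose_mul, transpose_transpose]
    _ = A * B := by rw [hAt]
    _ = (A * B)ᵀ := h3.symm
    _ = Bᵀ * Aᵀ := by rw [transpose_mul]
    _ = Bᵀ * A := by rw [hAt]
  exact penrose_unique e1 e2 e3 e4 h1 h2 h3 h4

lemma qmi_eq {q r : ℕ} (P : Matrix (Fin q ⊕ Fin r) (Fin q ⊕ Fin r) ℝ)
    (Z : Matrix (Fin r) (Fin q) ℝ) :
    qmi P Z = P.toBlocks₁₁ + Zᵀ * P.toBlocks₂₁ + P.toBlocks₁₂ * Z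
      + Zᵀ * (P.toBlocks₂₂ * Z) := by
  conv_lhs => rw [qmi, ← P.fromBlocks_toBlocks]
  rw [transpose_fromRows, transpose_one, fromCols_mul_fromBlocks]; erw [fromCols_mul_fromRows]
  simp only [Matrix.one_mul, Matrix.mul_one, Matrix.add_mul, Matrix.mul_assoc]
  abel

lemma posSemidef_smul' {N : ℕ} {M : Matrix (Fin N) (Fin N) ℝ} (hM : M.PosSemidef)
    {c : ℝ} (hc : 0 ≤ c) : (c • M).PosSemidef := by
  rw [posSemidef_iff_dotProduct_mulVec]
  constructor
  · unfold Matrix.IsHermitian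
    rw [conjTranspose_smul, hM.1.eq, star_trivial]
  · intro x
    rw [Matrix.smul_mulVec, dotProduct_smul]
    exact smul_nonneg hc (hM.dotProduct_mulVec_nonneg x)

/-- For `Π ∈ Π_{q,r}`, the set `Z_r(Π)` is nonempty and convex;
in fact `−Π₂₂^†Π₂₁ ∈ Z_r(Π)`. -/
theorem stmt_0 {q r : ℕ} (P : Matrix (Fin q ⊕ Fin r) (Fin q ⊕ Fin r) ℝ) (hP : memPi P) :
    (ZrSet P).Nonempty ∧ Convex ℝ (ZrSet P) ∧
      -(pinv P.toBlocks₂₂ * P.toBlocks₂₁) ∈ ZrSet P := by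
  obtain ⟨hsymm, hnsd, hschur, hker⟩ := hP
  set A := P.toBlocks₂₂ with hAdef
  have hA : A.IsHermitian := by
    have := hnsd.1.neg
    rwa [neg_neg] at this
  have h21 : (P.toBlocks₂₁)ᵀ = P.toBlocks₁₂ := by
    ext i j
    have h := congrFun (congrFun hsymm (Sum.inl i)) (Sum.inr j)
    simpa [Matrix.toBlocks₂₁, Matrix.toBlocks₁₂, Matrix.transpose_apply] using h
  obtain ⟨h1, h2, h3, h4⟩ := pinv_spec hA
  have hBt : (pinv A)ᵀ = pinv A := pinv_transpose_eq hA
  -- membership of Z₀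
  have hmem : -(pinv A * P.toBlocks₂₁) ∈ ZrSet P := by
    show (qmi P (-(pinv A * P.toBlocks₂₁))).PosSemidef
    have hZt : (-(pinv A * P.toBlocks₂₁))ᵀ = -(P.toBlocks₁₂ * pinv A) := by
      rw [transpose_neg, transpose_mul, hBt, h21]
    have key : pinv A * (A * (pinv A * P.toBlocks₂₁)) = pinv A * P.toBlocks₂₁ := by
      rw [← Matrix.mul_assoc, ← Matrix.mul_assoc, h2]
    have heq : qmi P (-(pinv A * P.toBlocks₂₁)) = schurC P := by
      rw [qmi_eq, hZt, schurC]
      simp only [Matrix.neg_mul, Matrix.mul_neg, neg_neg, Matrix.mul_assoc, ← hAdef, key]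
      abel
    rw [heq]
    exact hschur
  refine ⟨⟨_, hmem⟩, ?_, hmem⟩
  -- convexity
  intro Z₁ h₁ Z₂ h₂ a b ha hb hab
  show (qmi P (a • Z₁ + b • Z₂)).PosSemidef
  have hkey : qmi P (a • Z₁ + b • Z₂) = a • qmi P Z₁ + b • qmi P Z₂
      + (a * b) • ((Z₁ - Z₂)ᵀ * ((-A) * (Z₁ - Z₂))) := by
    have hb' : b = 1 - a := by linarith
    subst hb'
    simp only [qmi_eq, ← hAdef, transpose_add, transpose_smul, transpose_sub,
      Matrix.add_mul, Matrix.mul_add, Matrix.sub_mul, Matrix.mul_sub, Matrix.smul_mul,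
      Matrix.mul_smul, Matrix.neg_mul, Matrix.mul_neg, smul_add, smul_sub, smul_neg, smul_smul]
    module
  rw [hkey]
  have hc1 : ((Z₁ - Z₂)ᵀ * ((-A) * (Z₁ - Z₂))).PosSemidef := by
    have := hnsd.conjTranspose_mul_mul_same (Z₁ - Z₂)
    rwa [conjTranspose_eq_transpose_of_trivial, Matrix.mul_assoc] at this
  exact ((posSemidef_smul' h₁ ha).add (posSemidef_smul' h₂ hb)).add
    (posSemidef_smul' hc1 (mul_nonneg ha hb))
end

section
/- Let Π ∈ Π_{q,r}. Then the set Z_r⁺(Π) is nonempty if and only if the generalized Schur complement Π|Π₂₂ is positive definite. -/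
open Matrix
open scoped Classical

/-- The four Penrose conditions. -/
def IsPenrose {m n : ℕ} (A : Matrix (Fin m) (Fin n) ℝ) (B : Matrix (Fin n) (Fin m) ℝ) : Prop :=
  A * B * A = A ∧ B * A * B = B ∧ (A * B)ᵀ = A * B ∧ (B * A)ᵀ = B * A

/-- Existence of a Penrose inverse for a real symmetric matrix, via the spectral theorem. -/
lemma penrose_exists_of_isSymm {n : ℕ} (A : Matrix (Fin n) (Fin n) ℝ) (hA : Aᵀ = A) :
    ∃ B : Matrix (Fin n) (Fin n) ℝ, IsPenrose A B := by
  have hH : A.IsHermitian := by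
    rwa [Matrix.IsHermitian, conjTranspose_eq_transpose_of_trivial]
  set U : Matrix (Fin n) (Fin n) ℝ := (hH.eigenvectorUnitary : Matrix (Fin n) (Fin n) ℝ) with hU
  have hUU : star U * U = 1 := Matrix.mem_unitaryGroup_iff'.mp hH.eigenvectorUnitary.2
  set d : Fin n → ℝ := hH.eigenvalues with hd
  have hspec : A = U * diagonal d * star U := by
    have := hH.spectral_theorem
    simpa using this
  set d' : Fin n → ℝ := fun i => if d i = 0 then 0 else (d i)⁻¹ with hd'
  have hprod : ∀ (e f : Fin n → ℝ),
      (U * diagonal e * star U) * (U * diagonal f * star U)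
        = U * diagonal (fun i => e i * f i) * star U := by
    intro e f
    calc (U * diagonal e * star U) * (U * diagonal f * star U)
        = U * (diagonal e * (star U * U) * diagonal f) * star U := by noncomm_ring
      _ = U * diagonal (fun i => e i * f i) * star U := by
          rw [hUU, mul_one, diagonal_mul_diagonal]
  have hsymmUDU : ∀ (e : Fin n → ℝ), (U * diagonal e * star U)ᵀ = U * diagonal e * star U := by
    intro e
    rw [← conjTranspose_eq_transpose_of_trivial]
    simp [conjTranspose_mul, diagonal_conjTranspose, Matrix.mul_assoc,
      star_eq_conjTranspose, conjTranspose_eq_transpose_of_trivial, transpose_transpose]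
  have hdd : (fun i => (fun i => d i * d' i) i * d i) = d := by
    funext i
    by_cases h : d i = 0 <;> simp [hd', h]
  have hdd' : (fun i => (fun i => d' i * d i) i * d' i) = d' := by
    funext i
    by_cases h : d i = 0 <;> simp [hd', h]
  refine ⟨U * diagonal d' * star U, ?_, ?_, ?_, ?_⟩
  · rw [hspec, hprod, hprod, hdd]
  · rw [hspec, hprod, hprod, hdd']
  · rw [hspec, hprod]
    exact hsymmUDU _
  · rw [hspec, hprod]
    exact hsymmUDU _

/-- Uniqueness of the Penrose inverse. -/
lemma penrose_unique_s3 {m n : ℕ} (A : Matrix (Fin m) (Fin n) ℝ)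
    {B C : Matrix (Fin n) (Fin m) ℝ} (hB : IsPenrose A B) (hC : IsPenrose A C) : B = C := by
  obtain ⟨hB1, hB2, hB3, hB4⟩ := hB
  obtain ⟨hC1, hC2, hC3, hC4⟩ := hC
  have hAB : A * B = A * C := by
    calc A * B = (A * C * A) * B := by rw [hC1]
      _ = (A * C) * (A * B) := by simp only [Matrix.mul_assoc]
      _ = (A * C)ᵀ * (A * B)ᵀ := by rw [hC3, hB3]
      _ = ((A * B) * (A * C))ᵀ := (transpose_mul _ _).symm
      _ = ((A * B * A) * C)ᵀ := by simp only [Matrix.mul_assoc]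
      _ = (A * C)ᵀ := by rw [hB1]
      _ = A * C := hC3
  have hBA : B * A = C * A := by
    calc B * A = B * (A * C * A) := by rw [hC1]
      _ = (B * A) * (C * A) := by simp only [Matrix.mul_assoc]
      _ = (B * A)ᵀ * (C * A)ᵀ := by rw [hB4, hC4]
      _ = ((C * A) * (B * A))ᵀ := (transpose_mul _ _).symm
      _ = (C * (A * B * A))ᵀ := by simp only [Matrix.mul_assoc]
      _ = (C * A)ᵀ := by rw [hB1]
      _ = C * A := hC4
  calc B = B * A * B := hB2.symm
    _ = B * (A * C) := by rw [Matrix.mul_assoc, hAB]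
    _ = (C * A) * C := by rw [← Matrix.mul_assoc, hBA]
    _ = C := hC2

lemma pinv_isPenrose {n : ℕ} (A : Matrix (Fin n) (Fin n) ℝ) (hA : Aᵀ = A) :
    IsPenrose A (pinv A) := by
  have h : ∃ B : Matrix (Fin n) (Fin n) ℝ,
      A * B * A = A ∧ B * A * B = B ∧ (A * B)ᵀ = A * B ∧ (B * A)ᵀ = B * A :=
    penrose_exists_of_isSymm A hA
  rw [pinv, dif_pos h]
  exact h.choose_spec

lemma pinv_isSymm {n : ℕ} (A : Matrix (Fin n) (Fin n) ℝ) (hA : Aᵀ = A) :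
    (pinv A)ᵀ = pinv A := by
  obtain ⟨h1, h2, h3, h4⟩ := pinv_isPenrose A hA
  have ht : IsPenrose A (pinv A)ᵀ := by
    refine ⟨?_, ?_, ?_, ?_⟩
    · calc A * (pinv A)ᵀ * A = Aᵀ * (pinv A)ᵀ * Aᵀ := by rw [hA]
        _ = (A * (pinv A * A))ᵀ := by
            simp [transpose_mul, Matrix.mul_assoc]
        _ = (A * pinv A * A)ᵀ := by rw [Matrix.mul_assoc]
        _ = Aᵀ := by rw [h1]
        _ = A := hA
    · calc (pinv A)ᵀ * A * (pinv A)ᵀ = (pinv A)ᵀ * Aᵀ * (pinv A)ᵀ := by rw [hA]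
        _ = (pinv A * (A * pinv A))ᵀ := by
            simp [transpose_mul, Matrix.mul_assoc]
        _ = (pinv A * A * pinv A)ᵀ := by rw [Matrix.mul_assoc]
        _ = (pinv A)ᵀ := by rw [h2]
    · calc (A * (pinv A)ᵀ)ᵀ = pinv A * Aᵀ := by simp [transpose_mul]
        _ = pinv A * A := by rw [hA]
        _ = (pinv A * A)ᵀ := h4.symm
        _ = Aᵀ * (pinv A)ᵀ := by rw [transpose_mul]
        _ = A * (pinv A)ᵀ := by rw [hA]
    · calc ((pinv A)ᵀ * A)ᵀ = Aᵀ * pinv A := by simp [transpose_mul]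
        _ = A * pinv A := by rw [hA]
        _ = (A * pinv A)ᵀ := h3.symm
        _ = (pinv A)ᵀ * Aᵀ := by rw [transpose_mul]
        _ = (pinv A)ᵀ * A := by rw [hA]
  exact penrose_unique_s3 A ht ⟨h1, h2, h3, h4⟩

/-- For `Π ∈ Π_{q,r}`, the set `Z_r⁺(Π)` is nonempty
if and only if `Π|Π₂₂` is positive definite. -/
theorem stmt_3 {q r : ℕ} (P : Matrix (Fin q ⊕ Fin r) (Fin q ⊕ Fin r) ℝ) (hP : memPi P) :
    (ZrPlusSet P).Nonempty ↔ (schurC P).PosDef := by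
  obtain ⟨hsym, hN, hS, hker⟩ := hP
  set A := P.toBlocks₁₁ with hAdef
  set K := P.toBlocks₁₂ with hKdef
  set N := P.toBlocks₂₂ with hNdef
  have hK21 : P.toBlocks₂₁ = Kᵀ := by
    ext i j
    have := congrFun (congrFun hsym (Sum.inr i)) (Sum.inl j)
    simpa [hKdef, toBlocks₂₁, toBlocks₁₂, transpose_apply] using this.symm
  have hNs : Nᵀ = N := by
    ext i j
    have := congrFun (congrFun hsym (Sum.inr i)) (Sum.inr j)
    simpa [hNdef, toBlocks₂₂, transpose_apply] using this
  set B := pinv N with hBdef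
  obtain ⟨p1, p2, p3, p4⟩ := pinv_isPenrose N hNs
  rw [← hBdef] at p1 p2 p3 p4
  have hBs : Bᵀ = B := pinv_isSymm N hNs
  -- kernel condition gives K * B * N = K
  have hzero : K * (1 - B * N) = 0 := by
    ext i j
    have h0 : N *ᵥ ((1 - B * N) *ᵥ Pi.single j 1) = 0 := by
      rw [mulVec_mulVec]
      have hNm : N * (1 - B * N) = 0 := by
        rw [Matrix.mul_sub, Matrix.mul_one, ← Matrix.mul_assoc, p1, sub_self]
      rw [hNm, zero_mulVec]
    have h1 := hker _ h0
    have h2 : (K * (1 - B * N)) *ᵥ Pi.single j 1 = 0 := by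
      rw [← mulVec_mulVec]; exact h1
    have := congrFun h2 i
    simpa [mulVec_single] using this
  have hKBN : K * B * N = K := by
    have : K - K * (B * N) = 0 := by
      rw [← hzero, Matrix.mul_sub, Matrix.mul_one]
    have h := sub_eq_zero.mp this
    rw [← Matrix.mul_assoc] at h
    exact h.symm
  -- the fundamental identity
  have hqmi : ∀ Z : Matrix (Fin r) (Fin q) ℝ,
      qmi P Z = A + K * Z + Zᵀ * Kᵀ + Zᵀ * N * Z := by
    intro Z
    have hPblocks : P = fromBlocks A K Kᵀ N := by
      rw [hAdef, hKdef, hNdef, ← hK21, fromBlocks_toBlocks]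
    rw [qmi, transpose_fromRows, transpose_one, hPblocks, fromCols_mul_fromBlocks]
    erw [fromCols_mul_fromRows]
    simp only [Matrix.mul_one, Matrix.one_mul, Matrix.add_mul]
    abel
  have hkey : ∀ Z : Matrix (Fin r) (Fin q) ℝ,
      qmi P Z = schurC P + (Z + B * Kᵀ)ᵀ * N * (Z + B * Kᵀ) := by
    intro Z
    have hsch : schurC P = A - K * B * Kᵀ := by
      rw [schurC, ← hAdef, ← hKdef, ← hNdef, ← hBdef, hK21]
    have hT : (Z + B * Kᵀ)ᵀ = Zᵀ + K * B := by
      rw [transpose_add, transpose_mul, hBs, transpose_transpose]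
    have hNBK : N * (B * Kᵀ) = Kᵀ := by
      calc N * (B * Kᵀ) = Nᵀ * (Bᵀ * Kᵀ) := by rw [hNs, hBs]
        _ = (K * B * N)ᵀ := by rw [transpose_mul, transpose_mul]
        _ = Kᵀ := by rw [hKBN]
    have hexp : (Zᵀ + K * B) * N * (Z + B * Kᵀ)
        = Zᵀ * N * Z + Zᵀ * (N * (B * Kᵀ)) + (K * B * N) * Z + K * (B * N * B) * Kᵀ := by
      simp only [Matrix.add_mul, Matrix.mul_add, Matrix.mul_assoc]
      abel
    rw [hqmi Z, hsch, hT, hexp, hNBK, hKBN, p2]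
    abel
  constructor
  · rintro ⟨Z, hZ⟩
    refine PosDef.of_dotProduct_mulVec_pos hS.1 (fun x hx => ?_)
    have h1 := hZ.dotProduct_mulVec_pos hx
    rw [hkey Z] at h1
    set W := Z + B * Kᵀ with hW
    have h2 : star x ⬝ᵥ ((schurC P + Wᵀ * N * W) *ᵥ x)
        = star x ⬝ᵥ (schurC P *ᵥ x) + star x ⬝ᵥ ((Wᵀ * N * W) *ᵥ x) := by
      rw [add_mulVec, dotProduct_add]
    have h3 : star x ⬝ᵥ ((Wᵀ * N * W) *ᵥ x)
        = - (star (W *ᵥ x) ⬝ᵥ ((-N) *ᵥ (W *ᵥ x))) := by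
      rw [← mulVec_mulVec, ← mulVec_mulVec]
      rw [star_trivial, dotProduct_mulVec, vecMul_transpose]
      rw [neg_mulVec, dotProduct_neg, neg_neg, star_trivial]
    have h4 := hN.dotProduct_mulVec_nonneg (W *ᵥ x)
    rw [h2, h3] at h1
    linarith
  · intro hSpd
    refine ⟨-(B * Kᵀ), ?_⟩
    have : qmi P (-(B * Kᵀ)) = schurC P := by
      rw [hkey]
      simp
    show (qmi P (-(B * Kᵀ))).PosDef
    rw [this]
    exact hSpd
end

section
/- Let Π ∈ Π_{q,r}. Then Z ∈ Z_r(Π) if and only if Z = −Π₂₂^† Π₂₁ + ((−Π₂₂)^†)^{1/2} S (Π|Π₂₂)^{1/2} + (I_r − Π₂₂^† Π₂₂) T for some matrices S, T ∈ ℝ^{r×q} with SᵀS ⪯ I_q. Here M^{1/2} denotes the unique positive semidefinite square root of a positive semidefinite matrix M. -/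
open Matrix
open scoped Classical

namespace QMIAux

def IsPinv {m n : ℕ} (A : Matrix (Fin m) (Fin n) ℝ) (B : Matrix (Fin n) (Fin m) ℝ) : Prop :=
  A * B * A = A ∧ B * A * B = B ∧ (A * B)ᵀ = A * B ∧ (B * A)ᵀ = B * A

lemma IsPinv.unique {m n : ℕ} {A : Matrix (Fin m) (Fin n) ℝ} {B C : Matrix (Fin n) (Fin m) ℝ}
    (hB : IsPinv A B) (hC : IsPinv A C) : B = C := by
  obtain ⟨hB1, hB2, hB3, hB4⟩ := hB
  obtain ⟨hC1, hC2, hC3, hC4⟩ := hC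
  have hAB : A * B = A * C := by
    have h1 : Aᵀ = Aᵀ * (A * C) := by
      conv_lhs => rw [← hC1]
      rw [transpose_mul, hC3]
    calc A * B = (A * B)ᵀ := hB3.symm
    _ = Bᵀ * Aᵀ := transpose_mul _ _
    _ = Bᵀ * (Aᵀ * (A * C)) := by rw [← h1]
    _ = (Bᵀ * Aᵀ) * (A * C) := by rw [Matrix.mul_assoc]
    _ = (A * B)ᵀ * (A * C) := by rw [transpose_mul]
    _ = (A * B) * (A * C) := by rw [hB3]
    _ = ((A * B) * A) * C := by simp only [Matrix.mul_assoc]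
    _ = A * C := by rw [hB1]
  have hBA : B * A = C * A := by
    have h2 : Aᵀ = (C * A) * Aᵀ := by
      conv_lhs => rw [← hC1]
      rw [Matrix.mul_assoc, transpose_mul, hC4]
    calc B * A = (B * A)ᵀ := hB4.symm
    _ = Aᵀ * Bᵀ := transpose_mul _ _
    _ = ((C * A) * Aᵀ) * Bᵀ := by rw [← h2]
    _ = (C * A) * (Aᵀ * Bᵀ) := by rw [Matrix.mul_assoc]
    _ = (C * A) * (B * A)ᵀ := by rw [transpose_mul]
    _ = (C * A) * (B * A) := by rw [hB4]
    _ = C * ((A * B) * A) := by simp only [Matrix.mul_assoc]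
    _ = C * A := by rw [hB1]
  calc B = B * A * B := hB2.symm
  _ = B * (A * C) := by rw [Matrix.mul_assoc, hAB]
  _ = (B * A) * C := by rw [Matrix.mul_assoc]
  _ = (C * A) * C := by rw [hBA]
  _ = C := by rw [Matrix.mul_assoc] at hC2 ⊢; exact hC2

lemma pinv_eq {m n : ℕ} {A : Matrix (Fin m) (Fin n) ℝ} {B : Matrix (Fin n) (Fin m) ℝ}
    (hB : IsPinv A B) : pinv A = B := by
  have hex : ∃ B' : Matrix (Fin n) (Fin m) ℝ,
      A * B' * A = A ∧ B' * A * B' = B' ∧ (A * B')ᵀ = A * B' ∧ (B' * A)ᵀ = B' * A := ⟨B, hB⟩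
  rw [pinv, dif_pos hex]
  exact IsPinv.unique hex.choose_spec hB

lemma msqrt_eq {n : ℕ} {A B : Matrix (Fin n) (Fin n) ℝ}
    (hB : B.PosSemidef) (hBB : B * B = A) : msqrt A = B := by
  have hex : ∃ B' : Matrix (Fin n) (Fin n) ℝ, B'.PosSemidef ∧ B' * B' = A := ⟨B, hB, hBB⟩
  rw [msqrt, dif_pos hex]
  have h1 := hex.choose_spec
  open scoped MatrixOrder in
  exact (CFC.sq_eq_sq_iff _ _ h1.1.nonneg hB.nonneg).mp (by rw [pow_two, pow_two, h1.2, hBB])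

lemma psd_decomp {n : ℕ} {N : Matrix (Fin n) (Fin n) ℝ} (hN : N.PosSemidef) :
    ∃ (U : Matrix (Fin n) (Fin n) ℝ) (d : Fin n → ℝ),
      Uᵀ * U = 1 ∧ (∀ i, 0 ≤ d i) ∧ N = U * diagonal d * Uᵀ := by
  have hH := hN.1
  refine ⟨hH.eigenvectorUnitary, hH.eigenvalues, ?_, fun i => hN.eigenvalues_nonneg i, ?_⟩
  · have := (hH.eigenvectorUnitary).2
    rw [Matrix.mem_unitaryGroup_iff'] at this
    rw [← this]
    rw [star_eq_conjTranspose, conjTranspose_eq_transpose_of_trivial]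
  · have h := hH.spectral_theorem
    rw [Unitary.conjStarAlgAut_apply, star_eq_conjTranspose, conjTranspose_eq_transpose_of_trivial] at h
    simpa [RCLike.ofReal_real_eq_id] using h


lemma msqrt_spec {n : ℕ} {A : Matrix (Fin n) (Fin n) ℝ} (hA : A.PosSemidef) :
    (msqrt A).PosSemidef ∧ msqrt A * msqrt A = A := by
  open scoped MatrixOrder in
  rw [msqrt_eq (CFC.sqrt_nonneg A).posSemidef (CFC.sqrt_mul_sqrt_self A hA.nonneg)]
  open scoped MatrixOrder in
  exact ⟨(CFC.sqrt_nonneg A).posSemidef, CFC.sqrt_mul_sqrt_self A hA.nonneg⟩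

lemma IsPinv.neg {m n : ℕ} {A : Matrix (Fin m) (Fin n) ℝ} {B : Matrix (Fin n) (Fin m) ℝ}
    (h : IsPinv A B) : IsPinv (-A) (-B) := by
  obtain ⟨h1, h2, h3, h4⟩ := h
  refine ⟨?_, ?_, ?_, ?_⟩ <;> simp [Matrix.neg_mul, Matrix.mul_neg, h1, h2, h3, h4]

section Conj
variable {n : ℕ} {U : Matrix (Fin n) (Fin n) ℝ}

lemma conj_mul (hU : Uᵀ * U = 1) (d e : Fin n → ℝ) :
    (U * diagonal d * Uᵀ) * (U * diagonal e * Uᵀ) = U * diagonal (fun i => d i * e i) * Uᵀ := by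
  have h : diagonal d * (Uᵀ * (U * (diagonal e * Uᵀ))) = diagonal (fun i => d i * e i) * Uᵀ := by
    rw [← Matrix.mul_assoc Uᵀ U, hU, Matrix.one_mul, ← Matrix.mul_assoc,
      diagonal_mul_diagonal]
  simp only [Matrix.mul_assoc, h]

lemma conj_transpose (d : Fin n → ℝ) : (U * diagonal d * Uᵀ)ᵀ = U * diagonal d * Uᵀ := by
  simp [transpose_mul, diagonal_transpose, Matrix.mul_assoc]

lemma conj_psd {d : Fin n → ℝ} (hd : ∀ i, 0 ≤ d i) : (U * diagonal d * Uᵀ).PosSemidef := by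
  have h1 : (diagonal d).PosSemidef := posSemidef_diagonal_iff.mpr hd
  have := h1.mul_mul_conjTranspose_same U
  rwa [conjTranspose_eq_transpose_of_trivial] at this

/-- pointwise pseudo-inverse of a vector -/
noncomputable def dinv {n : ℕ} (d : Fin n → ℝ) : Fin n → ℝ :=
  fun i => if d i = 0 then 0 else (d i)⁻¹

lemma dinv_k1 (d : Fin n → ℝ) : (fun i => d i * dinv d i * d i) = d := by
  funext i
  by_cases h : d i = 0
  · simp [dinv, h]
  · simp only [dinv, if_neg h]
    field_simp

lemma dinv_k2 (d : Fin n → ℝ) : (fun i => dinv d i * d i * dinv d i) = dinv d := by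
  funext i
  by_cases h : d i = 0
  · simp [dinv, h]
  · simp only [dinv, if_neg h]
    field_simp

lemma dinv_nonneg {d : Fin n → ℝ} (hd : ∀ i, 0 ≤ d i) : ∀ i, 0 ≤ dinv d i := by
  intro i
  by_cases h : d i = 0
  · simp [dinv, h]
  · simp only [dinv, if_neg h]
    exact le_of_lt (inv_pos.mpr (lt_of_le_of_ne (hd i) (Ne.symm h)))

lemma pinv_conj (hU : Uᵀ * U = 1) (d : Fin n → ℝ) :
    pinv (U * diagonal d * Uᵀ) = U * diagonal (dinv d) * Uᵀ := by
  apply pinv_eq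
  refine ⟨?_, ?_, ?_, ?_⟩
  · rw [conj_mul hU, conj_mul hU, dinv_k1]
  · rw [conj_mul hU, conj_mul hU, dinv_k2]
  · rw [conj_mul hU, conj_transpose]
  · rw [conj_mul hU, conj_transpose]

lemma msqrt_conj (hU : Uᵀ * U = 1) {d : Fin n → ℝ} (hd : ∀ i, 0 ≤ d i) :
    msqrt (U * diagonal d * Uᵀ) = U * diagonal (fun i => Real.sqrt (d i)) * Uᵀ := by
  apply msqrt_eq (conj_psd (fun i => Real.sqrt_nonneg _))
  rw [conj_mul hU]
  have : (fun i => Real.sqrt (d i) * Real.sqrt (d i)) = d :=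
    funext fun i => Real.mul_self_sqrt (hd i)
  rw [this]

end Conj

/-- master facts for a PSD matrix -/
lemma psd_master {n : ℕ} {N : Matrix (Fin n) (Fin n) ℝ} (hN : N.PosSemidef) :
    IsPinv N (pinv N) ∧ (pinv N).PosSemidef ∧
      msqrt (pinv N) * msqrt N = pinv N * N ∧
      msqrt N * msqrt (pinv N) = pinv N * N ∧
      N * pinv N = pinv N * N := by
  obtain ⟨U, d, hU, hd, rfl⟩ := psd_decomp hN
  have hpinv := pinv_conj hU d
  have hmsq := msqrt_conj hU hd
  have hmsqp : msqrt (pinv (U * diagonal d * Uᵀ)) =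
      U * diagonal (fun i => Real.sqrt (dinv d i)) * Uᵀ := by
    rw [hpinv]; exact msqrt_conj hU (dinv_nonneg hd)
  have hkey : (fun i => Real.sqrt (dinv d i) * Real.sqrt (d i)) = fun i => dinv d i * d i := by
    funext i
    by_cases h : d i = 0
    · simp [dinv, h]
    · have hpos : 0 < d i := lt_of_le_of_ne (hd i) (Ne.symm h)
      simp only [dinv, if_neg h]
      rw [← Real.sqrt_mul (by positivity), inv_mul_cancel₀ h, Real.sqrt_one]
  have hcomm : (fun i => d i * dinv d i) = fun i => dinv d i * d i := by
    funext i; rw [mul_comm]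
  refine ⟨?_, ?_, ?_, ?_, ?_⟩
  · rw [hpinv]
    exact ⟨by rw [conj_mul hU, conj_mul hU, dinv_k1],
      by rw [conj_mul hU, conj_mul hU, dinv_k2],
      by rw [conj_mul hU, conj_transpose],
      by rw [conj_mul hU, conj_transpose]⟩
  · rw [hpinv]; exact conj_psd (dinv_nonneg hd)
  · rw [hmsq, hmsqp, hpinv, conj_mul hU, conj_mul hU, hkey]
  · rw [hmsq, hmsqp, hpinv, conj_mul hU, conj_mul hU]
    have : (fun i => Real.sqrt (d i) * Real.sqrt (dinv d i)) = fun i => dinv d i * d i := by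
      funext i
      rw [mul_comm]
      exact congrFun hkey i
    rw [this]
  · rw [hpinv, conj_mul hU, conj_mul hU, hcomm]



lemma psd_symm {a : ℕ} {M : Matrix (Fin a) (Fin a) ℝ} (h : M.PosSemidef) : Mᵀ = M := by
  have := h.1
  rwa [Matrix.IsHermitian, conjTranspose_eq_transpose_of_trivial] at this

lemma psd_conj {a b : ℕ} {M : Matrix (Fin a) (Fin a) ℝ} (hM : M.PosSemidef)
    (C : Matrix (Fin a) (Fin b) ℝ) : (Cᵀ * M * C).PosSemidef := by
  have := hM.conjTranspose_mul_mul_same C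
  rwa [conjTranspose_eq_transpose_of_trivial] at this

lemma psd_tmul {a b : ℕ} (C : Matrix (Fin a) (Fin b) ℝ) : (Cᵀ * C).PosSemidef := by
  have := posSemidef_conjTranspose_mul_self C
  rwa [conjTranspose_eq_transpose_of_trivial] at this

lemma tmul_eq_zero {a b : ℕ} {C : Matrix (Fin a) (Fin b) ℝ} (h : Cᵀ * C = 0) : C = 0 := by
  rw [← conjTranspose_eq_transpose_of_trivial] at h
  exact conjTranspose_mul_self_eq_zero.mp h

lemma proj_psd {a : ℕ} {Q : Matrix (Fin a) (Fin a) ℝ} (hs : Qᵀ = Q) (hi : Q * Q = Q) :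
    Q.PosSemidef := by
  have h : Q = Qᵀ * Q := by rw [hs, hi]
  rw [h]
  exact psd_tmul Q

lemma psd_antisymm {a : ℕ} {M : Matrix (Fin a) (Fin a) ℝ} (h1 : M.PosSemidef)
    (h2 : (-M).PosSemidef) : M = 0 := by
  have hs : Mᵀ = M := psd_symm h1
  have hq : ∀ x : Fin a → ℝ, x ⬝ᵥ (M *ᵥ x) = 0 := by
    intro x
    have ha := h1.dotProduct_mulVec_nonneg x
    have hb := h2.dotProduct_mulVec_nonneg x
    rw [star_trivial] at ha hb
    rw [neg_mulVec, dotProduct_neg] at hb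
    linarith
  have hbil : ∀ x y : Fin a → ℝ, x ⬝ᵥ (M *ᵥ y) = 0 := by
    intro x y
    have hxy := hq (x + y)
    have hsymm : y ⬝ᵥ (M *ᵥ x) = x ⬝ᵥ (M *ᵥ y) := by
      rw [dotProduct_mulVec, ← mulVec_transpose, hs, dotProduct_comm]
    rw [mulVec_add, dotProduct_add, add_dotProduct, add_dotProduct, hq x, hq y] at hxy
    rw [hsymm] at hxy
    linarith
  have hz : ∀ y : Fin a → ℝ, M *ᵥ y = 0 := by
    intro y
    have := hbil (M *ᵥ y) y
    exact dotProduct_self_eq_zero.mp this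
  ext i j
  have := congrFun (hz (Pi.single j 1)) i
  rw [mulVec_single] at this
  simpa using this

lemma ker_mul {a b c k : ℕ} {X : Matrix (Fin a) (Fin b) ℝ} {Y : Matrix (Fin c) (Fin b) ℝ}
    (h : ∀ x, X *ᵥ x = 0 → Y *ᵥ x = 0) {C : Matrix (Fin b) (Fin k) ℝ}
    (hXC : X * C = 0) : Y * C = 0 := by
  ext i j
  have hcol : X *ᵥ (fun t => C t j) = 0 := by
    funext i'
    have h0 : (X * C) i' j = 0 := by rw [hXC]; rfl
    simpa [Matrix.mul_apply, Matrix.mulVec, dotProduct] using h0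
  have := congrFun (h _ hcol) i
  simpa [Matrix.mul_apply, Matrix.mulVec, dotProduct] using this



lemma qmi_expand {q r : ℕ} (P : Matrix (Fin q ⊕ Fin r) (Fin q ⊕ Fin r) ℝ)
    (Z : Matrix (Fin r) (Fin q) ℝ) :
    qmi P Z = P.toBlocks₁₁ + P.toBlocks₁₂ * Z + Zᵀ * P.toBlocks₂₁ + Zᵀ * P.toBlocks₂₂ * Z := by
  rw [qmi]
  show (@HMul.hMul _ _ _ Matrix.instHMulOfFintypeOfMulOfAddCommMonoid (@HMul.hMul _ _ _ Matrix.instHMulOfFintypeOfMulOfAddCommMonoid (fromRows (1 : Matrix (Fin q) (Fin q) ℝ) Z)ᵀ P) (fromRows 1 Z) : Matrix (Fin q) (Fin q) ℝ) = _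
  conv_lhs => rw [← fromBlocks_toBlocks P]
  rw [Matrix.mul_assoc, fromBlocks_mul_fromRows, transpose_fromRows, fromCols_mul_fromRows]
  simp only [transpose_one, Matrix.mul_one, Matrix.one_mul, Matrix.mul_add, Matrix.mul_assoc]
  abel

lemma blocks21_eq {q r : ℕ} {P : Matrix (Fin q ⊕ Fin r) (Fin q ⊕ Fin r) ℝ}
    (hSym : P.IsSymm) : P.toBlocks₂₁ = (P.toBlocks₁₂)ᵀ := by
  ext i j
  have := congrFun (congrFun hSym (Sum.inr i)) (Sum.inl j)
  rw [transpose_apply] at this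
  simpa [toBlocks₂₁, toBlocks₁₂] using this.symm

end QMIAux

/-- Parameterization of `Z_r(Π)` for `Π ∈ Π_{q,r}`:
`Z ∈ Z_r(Π)` iff `Z = −Π₂₂^†Π₂₁ + ((−Π₂₂)^†)^{1/2} S (Π|Π₂₂)^{1/2} + (I − Π₂₂^†Π₂₂)T`
for some `S, T` with `SᵀS ⪯ I`. -/
theorem stmt_5 {q r : ℕ} (P : Matrix (Fin q ⊕ Fin r) (Fin q ⊕ Fin r) ℝ) (hP : memPi P)
    (Z : Matrix (Fin r) (Fin q) ℝ) :
    Z ∈ ZrSet P ↔ ∃ S T : Matrix (Fin r) (Fin q) ℝ,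
      ((1 : Matrix (Fin q) (Fin q) ℝ) - Sᵀ * S).PosSemidef ∧
      Z = -(pinv P.toBlocks₂₂ * P.toBlocks₂₁)
          + msqrt (pinv (-P.toBlocks₂₂)) * S * msqrt (schurC P)
          + ((1 : Matrix (Fin r) (Fin r) ℝ) - pinv P.toBlocks₂₂ * P.toBlocks₂₂) * T := by

  simp only [ZrSet, Set.mem_setOf_eq]
  obtain ⟨hSym, hN, hSc, hker⟩ := hP
  set A := P.toBlocks₁₂ with hA
  set N := -P.toBlocks₂₂ with hNdef
  have hP22 : P.toBlocks₂₂ = -N := by rw [hNdef, neg_neg]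
  have hP21 : P.toBlocks₂₁ = Aᵀ := QMIAux.blocks21_eq hSym
  obtain ⟨hNp, hNdpsd, hRGQ0, hGRQ0, hNcomm⟩ := QMIAux.psd_master hN
  set Nd := pinv N with hNd
  set G := msqrt N with hG
  set R := msqrt (pinv N) with hR
  set Q := Nd * N with hQ
  have hGsq : G * G = N := (QMIAux.msqrt_spec hN).2
  have hGpsd : G.PosSemidef := (QMIAux.msqrt_spec hN).1
  have hGsymm : Gᵀ = G := QMIAux.psd_symm hGpsd
  have hRsymm : Rᵀ = R := QMIAux.psd_symm (QMIAux.msqrt_spec hNdpsd).1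
  have hNdsymm : Ndᵀ = Nd := QMIAux.psd_symm hNdpsd
  have hNsymm : Nᵀ = N := QMIAux.psd_symm hN
  have hRGQ : R * G = Q := hRGQ0
  have hGRQ : G * R = Q := hGRQ0
  have pen1 : N * Nd * N = N := hNp.1
  have pen2 : Nd * N * Nd = Nd := hNp.2.1
  have hQsymm : Qᵀ = Q := hNp.2.2.2
  have hQQ : Q * Q = Q := by
    rw [hQ]
    calc Nd * N * (Nd * N) = (Nd * N * Nd) * N := by simp only [Matrix.mul_assoc]
    _ = Nd * N := by rw [pen2]
  have hNQ : N * Q = N := by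
    rw [hQ, ← Matrix.mul_assoc]
    exact pen1
  have hQN : Q * N = N := by
    rw [← hNcomm]
    exact pen1
  have hQNd : Q * Nd = Nd := by rw [hQ, pen2]
  have hpinv22 : pinv P.toBlocks₂₂ = -Nd := by
    rw [hP22]
    exact QMIAux.pinv_eq (QMIAux.IsPinv.neg hNp)
  have hSc' : schurC P = P.toBlocks₁₁ + A * Nd * Aᵀ := by
    rw [schurC, hpinv22, hP21, ← hA, Matrix.mul_neg, Matrix.neg_mul, sub_neg_eq_add]
  have htq : (1 - Q)ᵀ = 1 - (Q : Matrix (Fin r) (Fin r) ℝ) := by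
    rw [transpose_sub, transpose_one, hQsymm]
  have hAQ : A * Q = A := by
    have hz : P.toBlocks₂₂ * ((1 : Matrix (Fin r) (Fin r) ℝ) - Q) = 0 := by
      rw [hP22, Matrix.neg_mul, Matrix.mul_sub, Matrix.mul_one, hNQ, sub_self, neg_zero]
    have h0 : A * ((1 : Matrix (Fin r) (Fin r) ℝ) - Q) = 0 := QMIAux.ker_mul hker hz
    rw [Matrix.mul_sub, Matrix.mul_one, sub_eq_zero] at h0
    exact h0.symm
  have hQAt : Q * Aᵀ = Aᵀ := by
    calc Q * Aᵀ = Qᵀ * Aᵀ := by rw [hQsymm]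
    _ = (A * Q)ᵀ := (transpose_mul A Q).symm
    _ = Aᵀ := by rw [hAQ]
  set W := Z - Nd * Aᵀ with hW
  have hWt : Wᵀ = Zᵀ - A * Nd := by rw [hW, transpose_sub, transpose_mul, transpose_transpose, hNdsymm]
  have hNW : N * W = N * Z - Aᵀ := by
    rw [hW, Matrix.mul_sub, ← Matrix.mul_assoc, hNcomm, hQAt]
  have hqmi : qmi P Z = P.toBlocks₁₁ + A * Z + Zᵀ * Aᵀ - Zᵀ * N * Z := by
    rw [QMIAux.qmi_expand, hP21, hP22, ← hA, Matrix.mul_neg, Matrix.neg_mul]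
    abel
  have hWNW : Wᵀ * N * W = Zᵀ * N * Z - Zᵀ * Aᵀ - A * Z + A * Nd * Aᵀ := by
    rw [Matrix.mul_assoc, hNW, hWt, Matrix.sub_mul, Matrix.mul_sub, Matrix.mul_sub]
    have h1 : A * Nd * (N * Z) = A * Z := by
      rw [← Matrix.mul_assoc, Matrix.mul_assoc A Nd N, ← hQ, hAQ]
    have h2 : Zᵀ * (N * Z) = Zᵀ * N * Z := (Matrix.mul_assoc _ _ _).symm
    rw [h1, h2]
    abel
  have hsquare : qmi P Z = schurC P - Wᵀ * N * W := by
    rw [hqmi, hSc', hWNW]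
    abel
  -- machinery for H = msqrt (schurC P)
  set Sc := schurC P with hScdef
  set H := msqrt Sc with hH
  have hHpsd : H.PosSemidef := (QMIAux.msqrt_spec hSc).1
  have hHH : H * H = Sc := (QMIAux.msqrt_spec hSc).2
  obtain ⟨hHp, hHdpsd, -, -, hHcomm⟩ := QMIAux.psd_master hHpsd
  set Hd := pinv H with hHd
  set QH := Hd * H with hQHdef
  have hHsymm : Hᵀ = H := QMIAux.psd_symm hHpsd
  have hHdsymm : Hdᵀ = Hd := QMIAux.psd_symm hHdpsd
  have hQHsymm : QHᵀ = QH := hHp.2.2.2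
  have hQHQH : QH * QH = QH := by
    rw [hQHdef]
    calc Hd * H * (Hd * H) = (Hd * H * Hd) * H := by simp only [Matrix.mul_assoc]
    _ = Hd * H := by rw [hHp.2.1]
  have hHQH : H * QH = H := by
    rw [hQHdef, ← Matrix.mul_assoc]
    exact hHp.1
  have htqH : (1 - QH)ᵀ = 1 - (QH : Matrix (Fin q) (Fin q) ℝ) := by
    rw [transpose_sub, transpose_one, hQHsymm]
  constructor
  · -- forward direction
    intro hmem
    have hpos : (Sc - Wᵀ * N * W).PosSemidef := by
      rw [hsquare] at hmem
      exact hmem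
    set K := G * W with hK
    set S₀ := K * Hd with hS₀
    have hKtK : Kᵀ * K = Wᵀ * N * W := by
      rw [hK, transpose_mul, hGsymm, Matrix.mul_assoc Wᵀ G (G * W), ← Matrix.mul_assoc G G W,
        hGsq, ← Matrix.mul_assoc]
    have hStS : S₀ᵀ * S₀ = Hd * (Wᵀ * N * W) * Hd := by
      rw [hS₀, transpose_mul, hHdsymm, ← Matrix.mul_assoc, Matrix.mul_assoc Hd Kᵀ K, hKtK]
    have hHdScHd : Hd * Sc * Hd = QH := by
      rw [← hHH]
      calc Hd * (H * H) * Hd = (Hd * H) * (H * Hd) := by simp only [Matrix.mul_assoc]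
      _ = (Hd * H) * QH := by rw [hHcomm]
      _ = QH * QH := by rw [← hQHdef]
      _ = QH := hQHQH
    have hkey1 : (1 : Matrix (Fin q) (Fin q) ℝ) - S₀ᵀ * S₀
        = (1 - QH) + Hdᵀ * (Sc - Wᵀ * N * W) * Hd := by
      rw [hHdsymm, Matrix.mul_sub, Matrix.sub_mul, hHdScHd, hStS]
      abel
    have hGoal1 : ((1 : Matrix (Fin q) (Fin q) ℝ) - S₀ᵀ * S₀).PosSemidef := by
      rw [hkey1]
      refine Matrix.PosSemidef.add (QMIAux.proj_psd htqH ?_) (QMIAux.psd_conj hpos Hd)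
      rw [Matrix.mul_sub, Matrix.mul_one, Matrix.sub_mul, Matrix.one_mul, hQHQH]
      abel
    -- show K * (1 - QH) = 0
    have hH1Q : H * (1 - QH) = 0 := by
      rw [Matrix.mul_sub, Matrix.mul_one, hHQH, sub_self]
    have h1QH : ((1 : Matrix (Fin q) (Fin q) ℝ) - QH) * H = 0 := by
      have := congrArg Matrix.transpose hH1Q
      rwa [transpose_mul, htqH, hHsymm, transpose_zero] at this
    have hMtM : (K * (1 - QH))ᵀ * (K * (1 - QH)) = (1 - QH)ᵀ * (Wᵀ * N * W) * (1 - QH) := by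
      rw [transpose_mul, ← Matrix.mul_assoc, Matrix.mul_assoc ((1 - QH)ᵀ) Kᵀ K, hKtK]
    have hScConj : (1 - QH)ᵀ * Sc * (1 - QH) = 0 := by
      rw [htqH, ← hHH, ← Matrix.mul_assoc, h1QH, Matrix.zero_mul, Matrix.zero_mul]
    have hMneg : (K * (1 - QH))ᵀ * (K * (1 - QH))
        = -((1 - QH)ᵀ * (Sc - Wᵀ * N * W) * (1 - QH)) := by
      rw [hMtM, Matrix.mul_sub ((1 - QH)ᵀ) Sc (Wᵀ * N * W),
        Matrix.sub_mul ((1 - QH)ᵀ * Sc) ((1 - QH)ᵀ * (Wᵀ * N * W)) (1 - QH), hScConj]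
      abel
    have hM0 : K * (1 - QH) = 0 := by
      apply QMIAux.tmul_eq_zero
      apply QMIAux.psd_antisymm (QMIAux.psd_tmul _)
      rw [hMneg, neg_neg]
      exact QMIAux.psd_conj hpos (1 - QH)
    have hQW0 : Q * (W * (1 - QH)) = 0 := by
      have h1 : G * (W * (1 - QH)) = 0 := by
        rw [← Matrix.mul_assoc, ← hK]
        exact hM0
      calc Q * (W * (1 - QH)) = Nd * (G * (G * (W * (1 - QH)))) := by
            rw [hQ, ← hGsq]
            simp only [Matrix.mul_assoc]
      _ = 0 := by rw [h1, Matrix.mul_zero, Matrix.mul_zero]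
    have hQWQH : Q * W * QH = Q * W := by
      have hexp : Q * (W * (1 - QH)) = Q * W - Q * W * QH := by
        rw [Matrix.mul_sub, Matrix.mul_one, Matrix.mul_sub, ← Matrix.mul_assoc]
      rw [hexp] at hQW0
      exact (sub_eq_zero.mp hQW0).symm
    have hRSH : R * S₀ * H = Q * W := by
      rw [hS₀, hK]
      calc R * (G * W * Hd) * H = R * G * W * (Hd * H) := by simp only [Matrix.mul_assoc]
      _ = Q * W * QH := by rw [hRGQ, ← hQHdef]
      _ = Q * W := hQWQH
    refine ⟨S₀, W, hGoal1, ?_⟩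
    rw [hpinv22, hP21, hP22]
    simp only [Matrix.neg_mul, Matrix.mul_neg, neg_neg]
    rw [← hQ, hRSH, hW]
    simp only [Matrix.sub_mul, Matrix.mul_sub, Matrix.one_mul]
    abel
  · -- backward direction
    rintro ⟨S, T, hS, hZeq⟩
    rw [hsquare]
    rw [hpinv22, hP21, hP22] at hZeq
    simp only [Matrix.neg_mul, Matrix.mul_neg, neg_neg] at hZeq
    rw [← hQ] at hZeq
    have hWeq : W = R * S * H + (1 - Q) * T := by
      rw [hW, hZeq]
      abel
    have hRNR : R * N * R = Q := by
      rw [← hGsq, ← Matrix.mul_assoc, hRGQ, Matrix.mul_assoc, hGRQ, hQQ]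
    have hN1Q : N * (1 - Q) = 0 := by
      rw [Matrix.mul_sub, Matrix.mul_one, hNQ, sub_self]
    have h1QN : ((1 : Matrix (Fin r) (Fin r) ℝ) - Q) * N = 0 := by
      rw [Matrix.sub_mul, Matrix.one_mul, hQN, sub_self]
    have hNW' : N * W = N * (R * S * H) := by
      rw [hWeq, Matrix.mul_add, ← Matrix.mul_assoc N (1 - Q) T, hN1Q, Matrix.zero_mul, add_zero]
    have hcol : R * (N * (R * (S * H))) = Q * (S * H) := by
      calc R * (N * (R * (S * H))) = (R * N * R) * (S * H) := by simp only [Matrix.mul_assoc]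
      _ = Q * (S * H) := by rw [hRNR]
    have hWNW2 : Wᵀ * N * W = Hᵀ * (Sᵀ * Q * S) * H := by
      rw [Matrix.mul_assoc, hNW', hWeq, transpose_add, Matrix.add_mul]
      have hY : ((1 - Q) * T)ᵀ * (N * (R * S * H)) = 0 := by
        rw [transpose_mul, htq, Matrix.mul_assoc Tᵀ (1 - Q) (N * (R * S * H)),
          ← Matrix.mul_assoc (1 - Q) N (R * S * H), h1QN, Matrix.zero_mul, Matrix.mul_zero]
      rw [hY, add_zero]
      simp only [transpose_mul, hRsymm, Matrix.mul_assoc]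
      rw [hcol]
    have hproj : ((1 : Matrix (Fin r) (Fin r) ℝ) - Q).PosSemidef := by
      refine QMIAux.proj_psd htq ?_
      rw [Matrix.mul_sub, Matrix.mul_one, Matrix.sub_mul, Matrix.one_mul, hQQ]
      abel
    have t1 : (Hᵀ * ((1 : Matrix (Fin q) (Fin q) ℝ) - Sᵀ * S) * H).PosSemidef :=
      QMIAux.psd_conj hS H
    have t2 : (Hᵀ * (Sᵀ * (1 - Q) * S) * H).PosSemidef :=
      QMIAux.psd_conj (QMIAux.psd_conj hproj S) H
    have e : Sc - Wᵀ * N * W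
        = Hᵀ * ((1 : Matrix (Fin q) (Fin q) ℝ) - Sᵀ * S) * H + Hᵀ * (Sᵀ * (1 - Q) * S) * H := by
      rw [hWNW2, ← hHH, hHsymm]
      simp only [Matrix.mul_sub, Matrix.sub_mul, Matrix.mul_add, Matrix.add_mul,
        Matrix.mul_one, Matrix.one_mul, Matrix.mul_assoc]
      abel
    rw [e]
    exact t1.add t2
end

section
/- Let Π ∈ Π_{q,r} and W ∈ ℝ^{q×p}. Then Z_r(Π)·W ⊆ Z_r(Π_W), where Z_r(Π)·W := { ZW : Z ∈ Z_r(Π) }. If, in addition, at least one of the following holds: (a) W has full column rank, or (b) Π₂₂ is nonsingular, then Z_r(Π)·W = Z_r(Π_W). -/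
open Matrix
open scoped Classical

def IsMPinv {m n : ℕ} (A : Matrix (Fin m) (Fin n) ℝ) (B : Matrix (Fin n) (Fin m) ℝ) : Prop :=
  A * B * A = A ∧ B * A * B = B ∧ (A * B)ᵀ = A * B ∧ (B * A)ᵀ = B * A

lemma isMPinv_unique {m n : ℕ} {A : Matrix (Fin m) (Fin n) ℝ} {B C : Matrix (Fin n) (Fin m) ℝ}
    (hB : IsMPinv A B) (hC : IsMPinv A C) : B = C := by
  obtain ⟨hB1, hB2, hB3, hB4⟩ := hB
  obtain ⟨hC1, hC2, hC3, hC4⟩ := hC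
  have hac : A * B = A * C := by
    calc A * B = A * C * A * B := by rw [hC1]
    _ = (A * C) * (A * B) := by simp only [Matrix.mul_assoc]
    _ = (A * C)ᵀ * (A * B)ᵀ := by rw [hC3, hB3]
    _ = ((A * B) * (A * C))ᵀ := (transpose_mul _ _).symm
    _ = (A * B * A * C)ᵀ := by rw [Matrix.mul_assoc (A * B) A C]
    _ = (A * C)ᵀ := by rw [hB1]
    _ = A * C := hC3
  have hca : B * A = C * A := by
    calc B * A = B * (A * C * A) := by rw [hC1]
    _ = (B * A) * (C * A) := by simp only [Matrix.mul_assoc]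
    _ = (B * A)ᵀ * (C * A)ᵀ := by rw [hB4, hC4]
    _ = ((C * A) * (B * A))ᵀ := (transpose_mul _ _).symm
    _ = (C * (A * B * A))ᵀ := by simp only [Matrix.mul_assoc]
    _ = (C * A)ᵀ := by rw [hB1]
    _ = C * A := hC4
  calc B = B * A * B := hB2.symm
  _ = B * (A * C) := by rw [Matrix.mul_assoc, hac]
  _ = (B * A) * C := by rw [Matrix.mul_assoc]
  _ = (C * A) * C := by rw [hca]
  _ = C := by rw [Matrix.mul_assoc] at hC2 ⊢; exact hC2

lemma pinv_eq_of {m n : ℕ} {A : Matrix (Fin m) (Fin n) ℝ} {B : Matrix (Fin n) (Fin m) ℝ}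
    (h : IsMPinv A B) : pinv A = B := by
  have hex : ∃ B : Matrix (Fin n) (Fin m) ℝ,
      A * B * A = A ∧ B * A * B = B ∧ (A * B)ᵀ = A * B ∧ (B * A)ᵀ = B * A := ⟨B, h⟩
  have : pinv A = hex.choose := by rw [pinv, dif_pos hex]
  rw [this]
  exact isMPinv_unique hex.choose_spec h

lemma isMPinv_diagonal {n : ℕ} (d : Fin n → ℝ) : IsMPinv (diagonal d) (diagonal d⁻¹) := by
  have h1 : diagonal d * diagonal d⁻¹ * diagonal d = diagonal d := by
    rw [diagonal_mul_diagonal, diagonal_mul_diagonal]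
    refine congrArg diagonal (funext fun i => ?_)
    by_cases h : d i = 0
    · simp [Pi.mul_apply, Pi.inv_apply, h]
    · field_simp [Pi.mul_apply, Pi.inv_apply, h]
      exact mul_inv_cancel₀ h
  have h2 : diagonal d⁻¹ * diagonal d * diagonal d⁻¹ = diagonal d⁻¹ := by
    rw [diagonal_mul_diagonal, diagonal_mul_diagonal]
    refine congrArg diagonal (funext fun i => ?_)
    by_cases h : d i = 0
    · simp [Pi.mul_apply, Pi.inv_apply, h]
    · field_simp [Pi.mul_apply, Pi.inv_apply, h]
      exact inv_mul_cancel₀ h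
  refine ⟨h1, h2, ?_, ?_⟩ <;> rw [diagonal_mul_diagonal, diagonal_transpose]

lemma isMPinv_conj {n : ℕ} {X Y : Matrix (Fin n) (Fin n) ℝ} (h : IsMPinv X Y)
    {U : Matrix (Fin n) (Fin n) ℝ} (hU : U * Uᵀ = 1) (hU' : Uᵀ * U = 1) :
    IsMPinv (U * X * Uᵀ) (U * Y * Uᵀ) := by
  obtain ⟨h1, h2, h3, h4⟩ := h
  have key : ∀ R S : Matrix (Fin n) (Fin n) ℝ,
      (U * R * Uᵀ) * (U * S * Uᵀ) = U * (R * S) * Uᵀ := by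
    intro R S
    calc (U * R * Uᵀ) * (U * S * Uᵀ) = U * R * (Uᵀ * U) * S * Uᵀ := by
          simp only [Matrix.mul_assoc]
    _ = U * (R * S) * Uᵀ := by rw [hU']; simp only [Matrix.mul_one, Matrix.mul_assoc]
  have keyT : ∀ R : Matrix (Fin n) (Fin n) ℝ, (U * R * Uᵀ)ᵀ = U * Rᵀ * Uᵀ := by
    intro R
    simp only [transpose_mul, transpose_transpose, Matrix.mul_assoc]
  refine ⟨?_, ?_, ?_, ?_⟩
  · rw [key, key, h1]
  · rw [key, key, h2]
  · rw [key, keyT, h3]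
  · rw [key, keyT, h4]

lemma pinv_isMPinv_symm {n : ℕ} {A : Matrix (Fin n) (Fin n) ℝ} (hA : Aᵀ = A) :
    IsMPinv A (pinv A) ∧ (pinv A)ᵀ = pinv A := by
  have hH : A.IsHermitian := by
    rwa [Matrix.IsHermitian, conjTranspose_eq_transpose_of_trivial]
  set U : Matrix (Fin n) (Fin n) ℝ := (hH.eigenvectorUnitary : Matrix (Fin n) (Fin n) ℝ) with hUdef
  have hUmem := (hH.eigenvectorUnitary).2
  rw [Matrix.mem_unitaryGroup_iff] at hUmem
  have hUmem' := (hH.eigenvectorUnitary).2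
  rw [Matrix.mem_unitaryGroup_iff'] at hUmem'
  have hstar : star U = Uᵀ := by
    rw [Matrix.star_eq_conjTranspose, conjTranspose_eq_transpose_of_trivial]
  have hU1 : U * Uᵀ = 1 := by rw [← hstar]; exact hUmem
  have hU2 : Uᵀ * U = 1 := by rw [← hstar]; exact hUmem'
  set d : Fin n → ℝ := RCLike.ofReal ∘ hH.eigenvalues with hd
  have hspec : A = U * diagonal d * Uᵀ := by
    rw [← hstar]; exact hH.spectral_theorem
  set B : Matrix (Fin n) (Fin n) ℝ := U * diagonal d⁻¹ * Uᵀ with hB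
  have hmp : IsMPinv A B := by
    rw [hspec]
    exact isMPinv_conj (isMPinv_diagonal d) hU1 hU2
  have hpB : pinv A = B := pinv_eq_of hmp
  refine ⟨by rw [hpB]; exact hmp, ?_⟩
  rw [hpB, hB]
  simp only [transpose_mul, transpose_transpose, diagonal_transpose, Matrix.mul_assoc]

lemma pinv_of_isUnit {n : ℕ} {A : Matrix (Fin n) (Fin n) ℝ} (h : IsUnit A.det) :
    pinv A = A⁻¹ := by
  apply pinv_eq_of
  refine ⟨?_, ?_, ?_, ?_⟩ <;>
    simp [Matrix.mul_nonsing_inv A h, Matrix.nonsing_inv_mul A h]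

lemma psd_of_eq_transpose_mul {n m : ℕ} {X : Matrix (Fin n) (Fin n) ℝ}
    (B : Matrix (Fin m) (Fin n) ℝ) (h : X = Bᵀ * B) : X.PosSemidef := by
  rw [h, ← conjTranspose_eq_transpose_of_trivial]
  exact posSemidef_conjTranspose_mul_self B

lemma psd_conj {n m : ℕ} {A : Matrix (Fin n) (Fin n) ℝ} (hA : A.PosSemidef)
    (B : Matrix (Fin n) (Fin m) ℝ) : (Bᵀ * A * B).PosSemidef := by
  rw [← conjTranspose_eq_transpose_of_trivial]
  exact hA.conjTranspose_mul_mul_same B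

lemma psd_neg_eq_zero {n : ℕ} {X : Matrix (Fin n) (Fin n) ℝ}
    (h1 : X.PosSemidef) (h2 : (-X).PosSemidef) : X = 0 := by
  have hsym : Xᵀ = X := by
    have := h1.1; rwa [Matrix.IsHermitian, conjTranspose_eq_transpose_of_trivial] at this
  have hq : ∀ x : Fin n → ℝ, x ⬝ᵥ X *ᵥ x = 0 := by
    intro x
    have ha := h1.dotProduct_mulVec_nonneg x
    have hb := h2.dotProduct_mulVec_nonneg x
    simp only [star_trivial, neg_mulVec, dotProduct_neg] at ha hb
    linarith
  have hsingle : ∀ i j, Pi.single i (1:ℝ) ⬝ᵥ X *ᵥ Pi.single j (1:ℝ) = X i j := by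
    intro i j
    simp [mulVec_single, single_dotProduct]
  ext i j
  have h := hq (Pi.single i 1 + Pi.single j 1)
  have hexp : (Pi.single i 1 + Pi.single j 1) ⬝ᵥ X *ᵥ (Pi.single i (1:ℝ) + Pi.single j 1)
      = X i i + X j j + (X i j + X j i) := by
    rw [mulVec_add, dotProduct_add, add_dotProduct, add_dotProduct, hsingle, hsingle, hsingle,
      hsingle]
    ring
  rw [hexp] at h
  have hii := hq (Pi.single i 1); rw [hsingle] at hii
  have hjj := hq (Pi.single j 1); rw [hsingle] at hjj
  have hji : X j i = X i j := by conv_lhs => rw [← hsym, transpose_apply]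
  simp only [Matrix.zero_apply]
  rw [hii, hjj, hji] at h
  linarith

lemma psd_one_sub_proj {n : ℕ} {Q : Matrix (Fin n) (Fin n) ℝ}
    (hsym : Qᵀ = Q) (hidem : Q * Q = Q) : (1 - Q).PosSemidef := by
  apply psd_of_eq_transpose_mul (1 - Q)
  have : (1 - Q)ᵀ = 1 - Q := by rw [transpose_sub, transpose_one, hsym]
  rw [this, Matrix.sub_mul, Matrix.mul_sub, Matrix.mul_sub, hidem]
  simp only [Matrix.one_mul, Matrix.mul_one]
  abel

lemma sym_of_psd {n : ℕ} {X : Matrix (Fin n) (Fin n) ℝ} (h : X.PosSemidef) : Xᵀ = X := by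
  have := h.1; rwa [Matrix.IsHermitian, conjTranspose_eq_transpose_of_trivial] at this

lemma tmul_eq_zero {m n : ℕ} {A : Matrix (Fin m) (Fin n) ℝ} (h : Aᵀ * A = 0) : A = 0 := by
  rw [← conjTranspose_eq_transpose_of_trivial] at h
  exact conjTranspose_mul_self_eq_zero.mp h

open scoped MatrixOrder in
lemma key_exists {q r p : ℕ} {S : Matrix (Fin q) (Fin q) ℝ} {N : Matrix (Fin r) (Fin r) ℝ}
    (hS : S.PosSemidef) (hN : N.PosSemidef) (W : Matrix (Fin q) (Fin p) ℝ)
    (Yt : Matrix (Fin r) (Fin p) ℝ)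
    (hmain : (Wᵀ * S * W - Ytᵀ * N * Yt).PosSemidef)
    (hcase : IsUnit (Wᵀ * W).det ∨ IsUnit N.det) :
    ∃ V : Matrix (Fin r) (Fin q) ℝ, V * W = Yt ∧ (S - Vᵀ * N * V).PosSemidef := by
  classical
  set T : Matrix (Fin q) (Fin q) ℝ := CFC.sqrt S with hTdef
  set M : Matrix (Fin r) (Fin r) ℝ := CFC.sqrt N with hMdef
  have hTpsd : T.PosSemidef := (CFC.sqrt_nonneg S).posSemidef
  have hMpsd : M.PosSemidef := (CFC.sqrt_nonneg N).posSemidef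
  have hTsym : Tᵀ = T := sym_of_psd hTpsd
  have hMsym : Mᵀ = M := sym_of_psd hMpsd
  have hTT : T * T = S := CFC.sqrt_mul_sqrt_self S hS.nonneg
  have hMM : M * M = N := CFC.sqrt_mul_sqrt_self N hN.nonneg
  set A : Matrix (Fin r) (Fin p) ℝ := M * Yt with hAdef
  set B : Matrix (Fin q) (Fin p) ℝ := T * W with hBdef
  set C : Matrix (Fin p) (Fin p) ℝ := Bᵀ * B with hCdef
  have hCsym : Cᵀ = C := by rw [hCdef, transpose_mul, transpose_transpose]
  obtain ⟨hGmp, hGsym⟩ := pinv_isMPinv_symm hCsym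
  set G : Matrix (Fin p) (Fin p) ℝ := pinv C with hGdef
  have hCeq : C = Wᵀ * S * W := by
    rw [hCdef, hBdef, transpose_mul, hTsym, ← hTT]
    simp only [Matrix.mul_assoc]
  have hAA : Aᵀ * A = Ytᵀ * N * Yt := by
    rw [hAdef, transpose_mul, hMsym, ← hMM]
    simp only [Matrix.mul_assoc]
  have hdiff : (C - Aᵀ * A).PosSemidef := by rw [hCeq, hAA]; exact hmain
  clear_value T M
  clear_value A B C G
  set E : Matrix (Fin p) (Fin p) ℝ := 1 - G * C with hEdef
  clear_value E
  have hCE : C * E = 0 := by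
    rw [hEdef, Matrix.mul_sub, Matrix.mul_one, ← Matrix.mul_assoc, hGmp.1, sub_self]
  have hEsym : Eᵀ = E := by
    rw [hEdef, transpose_sub, transpose_one, transpose_mul, hGsym, hCsym]
    have h : C * G = (G * C)ᵀ := by rw [transpose_mul, hGsym, hCsym]
    rw [h, hGmp.2.2.2]
  have hBE : B * E = 0 := by
    apply tmul_eq_zero
    have h0 : (B * E)ᵀ * (B * E) = Eᵀ * (C * E) := by
      rw [transpose_mul, hCdef]; simp only [Matrix.mul_assoc]
    rw [h0, hCE, Matrix.mul_zero]
  have hX : (A * E)ᵀ * (A * E) = - (Eᵀ * (C - Aᵀ * A) * E) := by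
    have h : Eᵀ * (C - Aᵀ * A) * E = Eᵀ * (C * E) - Eᵀ * (Aᵀ * (A * E)) := by
      rw [Matrix.mul_sub Eᵀ C (Aᵀ * A), Matrix.sub_mul]
      simp only [Matrix.mul_assoc]
    rw [h, hCE, Matrix.mul_zero, zero_sub, neg_neg, transpose_mul]
    simp only [Matrix.mul_assoc]
  have hAE : A * E = 0 := by
    apply tmul_eq_zero
    have hpsd : ((A * E)ᵀ * (A * E)).PosSemidef := psd_of_eq_transpose_mul (A * E) rfl
    have hneg : (-((A * E)ᵀ * (A * E))).PosSemidef := by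
      rw [hX, neg_neg]; exact psd_conj hdiff E
    exact psd_neg_eq_zero hpsd hneg
  have hAGC : A * (G * C) = A := by
    have h := hAE
    rw [hEdef, Matrix.mul_sub, Matrix.mul_one, sub_eq_zero] at h
    exact h.symm
  set K : Matrix (Fin r) (Fin q) ℝ := A * G * Bᵀ with hKdef
  clear_value K
  have hKB : K * B = A := by
    rw [hKdef]
    calc A * G * Bᵀ * B = A * (G * C) := by rw [hCdef]; simp only [Matrix.mul_assoc]
    _ = A := hAGC
  set Q : Matrix (Fin q) (Fin q) ℝ := B * G * Bᵀ with hQdef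
  clear_value Q
  have hQsym : Qᵀ = Q := by
    rw [hQdef, transpose_mul, transpose_mul, transpose_transpose, hGsym, Matrix.mul_assoc]
  have hGCG : G * (C * (G * Bᵀ)) = G * Bᵀ := by
    rw [← Matrix.mul_assoc G C, ← Matrix.mul_assoc, hGmp.2.1]
  have hQQ : Q * Q = Q := by
    rw [hQdef]; simp only [Matrix.mul_assoc]
    rw [← Matrix.mul_assoc Bᵀ B, ← hCdef, hGCG]
  have e1 : (G * Bᵀ)ᵀ * (C - Aᵀ * A) * (G * Bᵀ) = Q - Kᵀ * K := by
    rw [transpose_mul, transpose_transpose, hGsym, Matrix.mul_sub (B * G) C (Aᵀ * A),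
      Matrix.sub_mul]
    congr 1
    · rw [hQdef]; simp only [Matrix.mul_assoc]; rw [hGCG]
    · rw [hKdef]; simp only [transpose_mul, transpose_transpose, hGsym, Matrix.mul_assoc]
  have hKKpsd : (1 - Kᵀ * K).PosSemidef := by
    have h1q : (1 - Q).PosSemidef := psd_one_sub_proj hQsym hQQ
    have h2q : ((G * Bᵀ)ᵀ * (C - Aᵀ * A) * (G * Bᵀ)).PosSemidef := psd_conj hdiff _
    have h : 1 - Kᵀ * K = (1 - Q) + ((G * Bᵀ)ᵀ * (C - Aᵀ * A) * (G * Bᵀ)) := by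
      rw [e1]; abel
    rw [h]; exact h1q.add h2q
  obtain ⟨hM1, hM2, hM3, hM4⟩ := (pinv_isMPinv_symm hMsym).1
  have hGmsym := (pinv_isMPinv_symm hMsym).2
  set Gm : Matrix (Fin r) (Fin r) ℝ := pinv M with hGmdef
  clear_value Gm
  set P' : Matrix (Fin r) (Fin r) ℝ := Gm * M with hP'def
  clear_value P'
  have hP'sym : P'ᵀ = P' := hM4
  have hMGmM : M * (Gm * M) = M := by rw [← Matrix.mul_assoc]; exact hM1
  have hP'idem : P' * P' = P' := by
    rw [hP'def]; simp only [Matrix.mul_assoc]; rw [hMGmM]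
  have hNP' : N * (1 - P') = 0 := by
    rw [Matrix.mul_sub, Matrix.mul_one, sub_eq_zero, ← hMM, hP'def,
      Matrix.mul_assoc M M (Gm * M), hMGmM]
  have hP'N : (1 - P') * N = 0 := by
    have h := congrArg Matrix.transpose hNP'
    rw [transpose_mul, transpose_sub, transpose_one, hP'sym, sym_of_psd hN,
      transpose_zero] at h
    exact h
  have hMGm_eq : M * Gm = P' := by
    calc M * Gm = (M * Gm)ᵀ := hM3.symm
    _ = Gmᵀ * Mᵀ := transpose_mul _ _
    _ = P' := by rw [hGmsym, hMsym, hP'def]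
  have hGmNGm : Gm * N * Gm = P' := by
    calc Gm * N * Gm = (Gm * M) * (M * Gm) := by
          rw [← hMM]; simp only [Matrix.mul_assoc]
    _ = P' * P' := by rw [hMGm_eq, ← hP'def]
    _ = P' := hP'idem
  set Wp : Matrix (Fin p) (Fin q) ℝ := (Wᵀ * W)⁻¹ * Wᵀ with hWpdef
  clear_value Wp
  set V : Matrix (Fin r) (Fin q) ℝ := Gm * K * T + (1 - P') * (Yt * Wp) with hVdef
  clear_value V
  have h1 : Gm * K * T * W = P' * Yt := by
    simp only [Matrix.mul_assoc]
    rw [← hBdef, hKB, hAdef, ← Matrix.mul_assoc Gm M Yt, ← hP'def]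
  have hVW : V * W = Yt := by
    rw [hVdef, Matrix.add_mul, h1]
    rcases hcase with hW | hNdet
    · have hWpW : Wp * W = 1 := by
        rw [hWpdef, Matrix.mul_assoc]; exact Matrix.nonsing_inv_mul _ hW
      have h2 : (1 - P') * (Yt * Wp) * W = Yt - P' * Yt := by
        rw [Matrix.mul_assoc, Matrix.mul_assoc, hWpW, Matrix.mul_one, Matrix.sub_mul,
          Matrix.one_mul]
      rw [h2]; abel
    · have hMdetunit : IsUnit M.det := by
        have hdet : M.det * M.det = N.det := by rw [← det_mul, hMM]
        exact isUnit_of_mul_isUnit_left (hdet ▸ hNdet)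
      have hP'1 : P' = 1 := by
        rw [hP'def, hGmdef, pinv_of_isUnit hMdetunit, Matrix.nonsing_inv_mul _ hMdetunit]
      rw [hP'1, sub_self, Matrix.zero_mul, Matrix.zero_mul, add_zero, Matrix.one_mul]
  refine ⟨V, hVW, ?_⟩
  have hNV2 : N * ((1 - P') * (Yt * Wp)) = 0 := by
    rw [← Matrix.mul_assoc, hNP', Matrix.zero_mul]
  have hV2N : ((1 - P') * (Yt * Wp))ᵀ * N = 0 := by
    rw [transpose_mul, transpose_sub, transpose_one, hP'sym, Matrix.mul_assoc, hP'N,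
      Matrix.mul_zero]
  have hVNV : Vᵀ * N * V = (Gm * K * T)ᵀ * N * (Gm * K * T) := by
    rw [hVdef, transpose_add, Matrix.add_mul, hV2N, add_zero, Matrix.mul_add,
      Matrix.mul_assoc ((Gm * K * T)ᵀ) N ((1 - P') * (Yt * Wp)), hNV2,
      Matrix.mul_zero, add_zero, ← Matrix.mul_assoc]
  have hV1 : (Gm * K * T)ᵀ * N * (Gm * K * T) = (K * T)ᵀ * P' * (K * T) := by
    calc (Gm * K * T)ᵀ * N * (Gm * K * T)
        = (K * T)ᵀ * (Gmᵀ * N * Gm) * (K * T) := by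
          simp only [transpose_mul, Matrix.mul_assoc]
    _ = (K * T)ᵀ * P' * (K * T) := by rw [hGmsym, hGmNGm]
  have hexp : Tᵀ * (1 - Kᵀ * K) * T + (K * T)ᵀ * (1 - P') * (K * T)
      = S - (K * T)ᵀ * P' * (K * T) := by
    simp only [Matrix.sub_mul, Matrix.mul_sub, Matrix.one_mul, Matrix.mul_one,
      transpose_mul, Matrix.mul_assoc]
    rw [hTsym, hTT]
    abel
  have hfin : S - Vᵀ * N * V = Tᵀ * (1 - Kᵀ * K) * T + (K * T)ᵀ * (1 - P') * (K * T) := by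
    rw [hVNV, hV1, hexp]
  rw [hfin]
  exact (psd_conj hKKpsd T).add
    (psd_conj (psd_one_sub_proj hP'sym hP'idem) (K * T))

lemma qmi_expand {q r : ℕ} (P : Matrix (Fin q ⊕ Fin r) (Fin q ⊕ Fin r) ℝ)
    (Z : Matrix (Fin r) (Fin q) ℝ) :
    qmi P Z = P.toBlocks₁₁ + P.toBlocks₁₂ * Z + Zᵀ * P.toBlocks₂₁ +
      Zᵀ * P.toBlocks₂₂ * Z := by
  rw [qmi]
  change @HMul.hMul (Matrix (Fin q) (Fin q ⊕ Fin r) ℝ) (Matrix (Fin q ⊕ Fin r) (Fin q) ℝ) (Matrix (Fin q) (Fin q) ℝ) instHMulOfFintypeOfMulOfAddCommMonoid ((fromRows (1 : Matrix (Fin q) (Fin q) ℝ) Z)ᵀ * P) (fromRows 1 Z) = _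
  conv_lhs => rw [← fromBlocks_toBlocks P]
  rw [Matrix.mul_assoc, fromBlocks_mul_fromRows, transpose_fromRows, transpose_one,
    fromCols_mul_fromRows]
  simp only [Matrix.mul_one, Matrix.one_mul, Matrix.mul_add, Matrix.add_mul,
    Matrix.mul_assoc]
  abel

lemma shift_identity {q r : ℕ} (P11 : Matrix (Fin q) (Fin q) ℝ)
    (P12 : Matrix (Fin q) (Fin r) ℝ) (P22 G : Matrix (Fin r) (Fin r) ℝ)
    (Z : Matrix (Fin r) (Fin q) ℝ)
    (h22 : P22ᵀ = P22) (hGsym : Gᵀ = G) (hGCG : G * P22 * G = G)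
    (h12 : P12 * G * P22 = P12) :
    P11 + P12 * Z + Zᵀ * P12ᵀ + Zᵀ * P22 * Z =
      (P11 - P12 * G * P12ᵀ) + (Z + G * P12ᵀ)ᵀ * P22 * (Z + G * P12ᵀ) := by
  have h2 : P22 * (G * P12ᵀ) = P12ᵀ := by
    have h := congrArg Matrix.transpose h12
    rw [transpose_mul, transpose_mul, hGsym, ← Matrix.mul_assoc, h22] at h
    rw [Matrix.mul_assoc] at h
    exact h
  have h3 : P12 * (G * (P22 * Z)) = P12 * Z := by
    rw [← Matrix.mul_assoc, ← Matrix.mul_assoc, h12]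
  rw [transpose_add, transpose_mul, transpose_transpose, hGsym]
  simp only [Matrix.add_mul, Matrix.mul_add, Matrix.mul_assoc]
  rw [h2, h3]
  abel

lemma isUnit_WtW_of_rank {q p : ℕ} {W : Matrix (Fin q) (Fin p) ℝ} (h : W.rank = p) :
    IsUnit (Wᵀ * W).det := by
  have hr : (Wᵀ * W).rank = p := by rw [Matrix.rank_transpose_mul_self, h]
  rw [← Matrix.isUnit_iff_isUnit_det, ← Matrix.mulVec_surjective_iff_isUnit]
  have htop : LinearMap.range (Wᵀ * W).mulVecLin = ⊤ := by
    apply Submodule.eq_top_of_finrank_eq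
    rw [← Matrix.rank, hr, Module.finrank_pi]
    simp
  intro y
  have : y ∈ LinearMap.range (Wᵀ * W).mulVecLin := by rw [htop]; trivial
  obtain ⟨x, hx⟩ := this
  exact ⟨x, hx⟩

/-- Projection result. For `Π ∈ Π_{q,r}` and `W ∈ ℝ^{q×p}`,
`Z_r(Π)·W ⊆ Z_r(Π_W)`; and if `W` has full column rank or `Π₂₂` is nonsingular,
then `Z_r(Π)·W = Z_r(Π_W)`. -/
theorem stmt_7 {q r p : ℕ} (P : Matrix (Fin q ⊕ Fin r) (Fin q ⊕ Fin r) ℝ)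
    (W : Matrix (Fin q) (Fin p) ℝ) (hP : memPi P) :
    (fun Z => Z * W) '' ZrSet P ⊆
      ZrSet (fromBlocks (Wᵀ * P.toBlocks₁₁ * W) (Wᵀ * P.toBlocks₁₂)
        (P.toBlocks₂₁ * W) P.toBlocks₂₂) ∧
    ((W.rank = p ∨ IsUnit P.toBlocks₂₂.det) →
      (fun Z => Z * W) '' ZrSet P =
        ZrSet (fromBlocks (Wᵀ * P.toBlocks₁₁ * W) (Wᵀ * P.toBlocks₁₂)
          (P.toBlocks₂₁ * W) P.toBlocks₂₂)) := by
  obtain ⟨hsymm, hN0, hSchur, hker⟩ := hP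
  have hPT : Pᵀ = P := hsymm
  have h22 : (P.toBlocks₂₂)ᵀ = P.toBlocks₂₂ := by
    ext i j
    have h := congrFun (congrFun hPT (Sum.inr i)) (Sum.inr j)
    simpa [Matrix.toBlocks₂₂, Matrix.transpose_apply] using h
  have h21 : P.toBlocks₂₁ = (P.toBlocks₁₂)ᵀ := by
    ext i j
    have h := congrFun (congrFun hPT (Sum.inl j)) (Sum.inr i)
    simpa [Matrix.toBlocks₂₁, Matrix.toBlocks₁₂, Matrix.transpose_apply] using h
  obtain ⟨hGmp, hGsym⟩ := pinv_isMPinv_symm h22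
  have hE22 : P.toBlocks₂₂ * (1 - pinv P.toBlocks₂₂ * P.toBlocks₂₂) = 0 := by
    rw [Matrix.mul_sub, Matrix.mul_one, ← Matrix.mul_assoc, hGmp.1, sub_self]
  have hkerM : P.toBlocks₁₂ * (1 - pinv P.toBlocks₂₂ * P.toBlocks₂₂) = 0 := by
    ext i j
    have hcol : P.toBlocks₂₂ *ᵥ ((1 - pinv P.toBlocks₂₂ * P.toBlocks₂₂) *ᵥ
        Pi.single j 1) = 0 := by
      rw [mulVec_mulVec, hE22, zero_mulVec]
    have h12col := hker _ hcol
    rw [mulVec_mulVec] at h12col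
    have h := congrFun h12col i
    simpa [mulVec_single] using h
  have h12G : P.toBlocks₁₂ * pinv P.toBlocks₂₂ * P.toBlocks₂₂ = P.toBlocks₁₂ := by
    rw [Matrix.mul_sub, Matrix.mul_one, sub_eq_zero, ← Matrix.mul_assoc] at hkerM
    exact hkerM.symm
  have hS'eq : schurC P = P.toBlocks₁₁ -
      P.toBlocks₁₂ * pinv P.toBlocks₂₂ * (P.toBlocks₁₂)ᵀ := by
    rw [schurC, h21]
  have hqmi : ∀ Z, qmi P Z = schurC P +
      (Z + pinv P.toBlocks₂₂ * (P.toBlocks₁₂)ᵀ)ᵀ * P.toBlocks₂₂ *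
      (Z + pinv P.toBlocks₂₂ * (P.toBlocks₁₂)ᵀ) := by
    intro Z
    rw [qmi_expand, h21, hS'eq]
    exact shift_identity _ _ _ _ _ h22 hGsym hGmp.2.1 h12G
  set PW := fromBlocks (Wᵀ * P.toBlocks₁₁ * W) (Wᵀ * P.toBlocks₁₂)
    (P.toBlocks₂₁ * W) P.toBlocks₂₂ with hPWdef
  have h21W : P.toBlocks₂₁ * W = (Wᵀ * P.toBlocks₁₂)ᵀ := by
    rw [h21, transpose_mul, transpose_transpose]
  have h12GW : (Wᵀ * P.toBlocks₁₂) * pinv P.toBlocks₂₂ * P.toBlocks₂₂ =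
      Wᵀ * P.toBlocks₁₂ := by
    simp only [Matrix.mul_assoc]
    rw [← Matrix.mul_assoc P.toBlocks₁₂ (pinv P.toBlocks₂₂) P.toBlocks₂₂, h12G]
  have hqmiW : ∀ Y, qmi PW Y = Wᵀ * schurC P * W +
      (Y + pinv P.toBlocks₂₂ * ((P.toBlocks₁₂)ᵀ * W))ᵀ * P.toBlocks₂₂ *
      (Y + pinv P.toBlocks₂₂ * ((P.toBlocks₁₂)ᵀ * W)) := by
    intro Y
    rw [qmi_expand, hPWdef]
    simp only [toBlocks_fromBlocks₁₁, toBlocks_fromBlocks₁₂, toBlocks_fromBlocks₂₁,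
      toBlocks_fromBlocks₂₂]
    rw [h21W]
    rw [shift_identity (Wᵀ * P.toBlocks₁₁ * W) (Wᵀ * P.toBlocks₁₂) P.toBlocks₂₂
      (pinv P.toBlocks₂₂) Y h22 hGsym hGmp.2.1 h12GW]
    congr 2
    · rw [hS'eq]
      rw [transpose_mul, transpose_transpose, Matrix.mul_sub, Matrix.sub_mul]
      simp only [Matrix.mul_assoc]
    · rw [transpose_mul, transpose_transpose]
    · rw [transpose_mul, transpose_transpose]
  have hforward : ∀ Z : Matrix (Fin r) (Fin q) ℝ, qmi PW (Z * W) = Wᵀ * qmi P Z * W := by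
    intro Z
    rw [qmi_expand, qmi_expand, hPWdef]
    simp only [toBlocks_fromBlocks₁₁, toBlocks_fromBlocks₁₂, toBlocks_fromBlocks₂₁,
      toBlocks_fromBlocks₂₂, transpose_mul, Matrix.mul_add, Matrix.add_mul,
      Matrix.mul_assoc]
  have hsub : (fun Z => Z * W) '' ZrSet P ⊆ ZrSet PW := by
    rintro _ ⟨Z, hZ, rfl⟩
    show (qmi PW (Z * W)).PosSemidef
    rw [hforward]
    exact psd_conj hZ W
  refine ⟨hsub, fun hcase => ?_⟩
  refine le_antisymm hsub ?_
  intro Y hY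
  have hYpsd : (qmi PW Y).PosSemidef := hY
  rw [hqmiW Y] at hYpsd
  set Yt : Matrix (Fin r) (Fin p) ℝ :=
    Y + pinv P.toBlocks₂₂ * ((P.toBlocks₁₂)ᵀ * W) with hYtdef
  have hmain : (Wᵀ * schurC P * W - Ytᵀ * (-P.toBlocks₂₂) * Yt).PosSemidef := by
    have heq : Wᵀ * schurC P * W - Ytᵀ * (-P.toBlocks₂₂) * Yt =
        Wᵀ * schurC P * W + Ytᵀ * P.toBlocks₂₂ * Yt := by
      rw [Matrix.mul_neg, Matrix.neg_mul, sub_neg_eq_add]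
    rw [heq]
    exact hYpsd
  have hcase' : IsUnit (Wᵀ * W).det ∨ IsUnit (-P.toBlocks₂₂).det := by
    rcases hcase with h | h
    · exact Or.inl (isUnit_WtW_of_rank h)
    · right
      rw [Matrix.det_neg]
      exact (isUnit_one.neg.pow _).mul h
  obtain ⟨V, hVW, hVpsd⟩ := key_exists hSchur hN0 W Yt hmain hcase'
  refine ⟨V - pinv P.toBlocks₂₂ * (P.toBlocks₁₂)ᵀ, ?_, ?_⟩
  · show (qmi P _).PosSemidef
    rw [hqmi, sub_add_cancel]
    have heq : schurC P + Vᵀ * P.toBlocks₂₂ * V =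
        schurC P - Vᵀ * (-P.toBlocks₂₂) * V := by
      rw [Matrix.mul_neg, Matrix.neg_mul, sub_neg_eq_add]
    rw [heq]
    exact hVpsd
  · show (V - pinv P.toBlocks₂₂ * (P.toBlocks₁₂)ᵀ) * W = Y
    rw [Matrix.sub_mul, hVW, hYtdef, Matrix.mul_assoc]
    abel
end
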